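/- (Generalized two-parameter turning point theorem.) Let φ : ℝ² → E be a C^∞ two-parameter family and T, Y_1, …, Y_p : ℝ² → ℝ be C^∞ functions such that for every (λ, λ′) the point φ(λ, λ′) satisfies the first law with temperature T(λ, λ′) and potentials Y_i(λ, λ′), with T(0,0) > 0. Suppose (λ, λ′) = (0,0) is a turning point of the curve λ′ = 0: ∂(S∘φ)/∂λ and ∂(X^i∘φ)/∂λ vanish at (0,0) for all i. Suppose (∂/∂λ′)[(∂T/∂λ)·∂(S∘φ)/∂λ + Σ_{i=1}^p (∂Y_i/∂λ)·∂(X^i∘φ)/∂λ] evaluated at (0,0) is strictly positive. Finally, suppose there exist continuous maps ũ, ũ′ : ℝ² → E such that for all (λ, λ′) in a neighborhood of (0,0), λ·DS_{φ(λ,λ′)}(ũ(λ,λ′)) + λ′·DS_{φ(λ,λ′)}(ũ′(λ,λ′)) = ∂(S∘φ)/∂λ (λ,λ′), and similarly λ·DX^i(ũ) + λ′·DX^i(ũ′) = ∂(X^i∘φ)/∂λ for all i. Then there exists ε > 0 such that for all λ′ ∈ (0, ε), the vector u := (∂φ/∂λ)(0, λ′) − λ′·ũ′(0, λ′) satisfies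 DM_{φ(0,λ′)}(u) = DS_{φ(0,λ′)}(u) = DX^i_{φ(0,λ′)}(u) = 0 for all i and B_{φ(0,λ′)}(u,u) < 0; in particular φ(0, λ′) is thermodynamically unstable for all λ′ ∈ (0, ε). -/

import Mathlib

open Filter Topology

/-- The second Fréchet derivative of `f : E → ℝ` at `φ`, applied to `u`, `v`. -/
noncomputable def D2 {E : Type*} [NormedAddCommGroup E] [NormedSpace ℝ E]
    (f : E → ℝ) (φ u v : E) : ℝ :=
  fderiv ℝ (fderiv ℝ f) φ u v

/-- `φ` satisfies the first law with temperature `T` and potentials `Y i`: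
`DM_φ = T·DS_φ + ∑ i, Y i · DX^i_φ` as continuous linear functionals. -/
def FirstLaw {E : Type*} [NormedAddCommGroup E] [NormedSpace ℝ E] {p : ℕ}
    (M S : E → ℝ) (X : Fin p → E → ℝ) (φ : E) (T : ℝ) (Y : Fin p → ℝ) : Prop :=
  fderiv ℝ M φ = T • fderiv ℝ S φ + ∑ i, Y i • fderiv ℝ (X i) φ

/-- The canonical bilinear form
`B_φ(u,v) = D²M_φ(u,v) − T·D²S_φ(u,v) − ∑ i, Y i·D²X^i_φ(u,v)`. -/
noncomputable def Bform {E : Type*} [NormedAddCommGroup E] [NormedSpace ℝ E] {p : ℕ}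
    (M S : E → ℝ) (X : Fin p → E → ℝ) (φ : E) (T : ℝ) (Y : Fin p → ℝ) (u v : E) : ℝ :=
  D2 M φ u v - T * D2 S φ u v - ∑ i, Y i * D2 (X i) φ u v

/-- Generalized two-parameter turning point theorem: for a smooth two-parameter
family of first-law solutions with a turning point of the curve `λ′ = 0` at the origin and
positive cross derivative `∂/∂λ′ [∂T/∂λ · ∂(S∘φ)/∂λ + ∑ᵢ ∂Yᵢ/∂λ · ∂(Xⁱ∘φ)/∂λ]` at `(0,0)`,
the solutions `φ(0, λ′)` are thermodynamically unstable for all small `λ′ > 0`. -/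
theorem turning_point_theorem_two_parameter
    {E : Type*} [NormedAddCommGroup E] [NormedSpace ℝ E] [CompleteSpace E]
    {p : ℕ} (M S : E → ℝ) (X : Fin p → E → ℝ)
    (hM : ContDiff ℝ (⊤ : ℕ∞) M) (hS : ContDiff ℝ (⊤ : ℕ∞) S)
    (hX : ∀ i, ContDiff ℝ (⊤ : ℕ∞) (X i))
    (φ : ℝ × ℝ → E) (hφ : ContDiff ℝ (⊤ : ℕ∞) φ)
    (T : ℝ × ℝ → ℝ) (Y : Fin p → ℝ × ℝ → ℝ)
    (hT : ContDiff ℝ (⊤ : ℕ∞) T) (hY : ∀ i, ContDiff ℝ (⊤ : ℕ∞) (Y i))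
    (hfl : ∀ q : ℝ × ℝ, FirstLaw M S X (φ q) (T q) (fun i => Y i q))
    (hT0 : 0 < T (0, 0))
    (hturnS : fderiv ℝ (S ∘ φ) (0, 0) (1, 0) = 0)
    (hturnX : ∀ i, fderiv ℝ (X i ∘ φ) (0, 0) (1, 0) = 0)
    (hσ : 0 < fderiv ℝ (fun q =>
      fderiv ℝ T q (1, 0) * fderiv ℝ (S ∘ φ) q (1, 0) +
        ∑ i, fderiv ℝ (Y i) q (1, 0) * fderiv ℝ (X i ∘ φ) q (1, 0)) (0, 0) (0, 1))
    (u' v' : ℝ × ℝ → E) (hu'cont : Continuous u') (hv'cont : Continuous v')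
    (huv' : ∀ᶠ q in 𝓝 ((0, 0) : ℝ × ℝ),
      (q.1 * fderiv ℝ S (φ q) (u' q) + q.2 * fderiv ℝ S (φ q) (v' q)
          = fderiv ℝ (S ∘ φ) q (1, 0)) ∧
      ∀ i, q.1 * fderiv ℝ (X i) (φ q) (u' q) + q.2 * fderiv ℝ (X i) (φ q) (v' q)
          = fderiv ℝ (X i ∘ φ) q (1, 0)) :
    ∃ ε > 0, ∀ l' ∈ Set.Ioo (0 : ℝ) ε,
      fderiv ℝ M (φ (0, l')) (fderiv ℝ φ (0, l') (1, 0) - l' • v' (0, l')) = 0 ∧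
      fderiv ℝ S (φ (0, l')) (fderiv ℝ φ (0, l') (1, 0) - l' • v' (0, l')) = 0 ∧
      (∀ i, fderiv ℝ (X i) (φ (0, l')) (fderiv ℝ φ (0, l') (1, 0) - l' • v' (0, l')) = 0) ∧
      Bform M S X (φ (0, l')) (T (0, l')) (fun i => Y i (0, l'))
        (fderiv ℝ φ (0, l') (1, 0) - l' • v' (0, l'))
        (fderiv ℝ φ (0, l') (1, 0) - l' • v' (0, l')) < 0 := by
  classical
  have hle : ((⊤ : ℕ∞) : WithTop ℕ∞) + 1 ≤ ((⊤ : ℕ∞) : WithTop ℕ∞) := by exact_mod_cast le_rfl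
  have hone : ((⊤ : ℕ∞) : WithTop ℕ∞) ≠ 0 := by simp
  have hφd : Differentiable ℝ φ := hφ.differentiable hone
  have hSd : Differentiable ℝ S := hS.differentiable hone
  have hXd : ∀ i, Differentiable ℝ (X i) := fun i => (hX i).differentiable hone
  have hM1 : ContDiff ℝ (⊤ : ℕ∞) (fderiv ℝ M) := hM.fderiv_right hle
  have hS1 : ContDiff ℝ (⊤ : ℕ∞) (fderiv ℝ S) := hS.fderiv_right hle
  have hX1 : ∀ i, ContDiff ℝ (⊤ : ℕ∞) (fderiv ℝ (X i)) := fun i => (hX i).fderiv_right hle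
  have hTd : Differentiable ℝ T := hT.differentiable hone
  have hYd : ∀ i, Differentiable ℝ (Y i) := fun i => (hY i).differentiable hone
  -- chain rules
  have chainS : ∀ q : ℝ × ℝ, fderiv ℝ (S ∘ φ) q (1, 0)
      = fderiv ℝ S (φ q) (fderiv ℝ φ q (1, 0)) := by
    intro q; rw [fderiv_comp q (hSd (φ q)) (hφd q)]; rfl
  have chainX : ∀ (i : Fin p) (q : ℝ × ℝ), fderiv ℝ (X i ∘ φ) q (1, 0)
      = fderiv ℝ (X i) (φ q) (fderiv ℝ φ q (1, 0)) := by
    intro i q; rw [fderiv_comp q (hXd i (φ q)) (hφd q)]; rfl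
  -- key: derivative of the first law along λ
  have key : ∀ (q : ℝ × ℝ) (w : E),
      fderiv ℝ (fderiv ℝ M) (φ q) (fderiv ℝ φ q (1, 0)) w
        = T q * fderiv ℝ (fderiv ℝ S) (φ q) (fderiv ℝ φ q (1, 0)) w
          + fderiv ℝ T q (1, 0) * fderiv ℝ S (φ q) w
          + ∑ i, (Y i q * fderiv ℝ (fderiv ℝ (X i)) (φ q) (fderiv ℝ φ q (1, 0)) w
              + fderiv ℝ (Y i) q (1, 0) * fderiv ℝ (X i) (φ q) w) := by
    intro q w
    have hL : HasFDerivAt (fun q => fderiv ℝ M (φ q))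
        ((fderiv ℝ (fderiv ℝ M) (φ q)).comp (fderiv ℝ φ q)) q :=
      ((hM1.differentiable hone (φ q)).hasFDerivAt).comp q (hφd q).hasFDerivAt
    have hRS : HasFDerivAt (fun q => T q • fderiv ℝ S (φ q))
        (T q • ((fderiv ℝ (fderiv ℝ S) (φ q)).comp (fderiv ℝ φ q))
          + (fderiv ℝ T q).smulRight (fderiv ℝ S (φ q))) q :=
      ((hTd q).hasFDerivAt).smul
        (((hS1.differentiable hone (φ q)).hasFDerivAt).comp q (hφd q).hasFDerivAt)
    have hRX : ∀ i : Fin p, HasFDerivAt (fun q => Y i q • fderiv ℝ (X i) (φ q))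
        (Y i q • ((fderiv ℝ (fderiv ℝ (X i)) (φ q)).comp (fderiv ℝ φ q))
          + (fderiv ℝ (Y i) q).smulRight (fderiv ℝ (X i) (φ q))) q := fun i =>
      ((hYd i q).hasFDerivAt).smul
        ((((hX1 i).differentiable hone (φ q)).hasFDerivAt).comp q (hφd q).hasFDerivAt)
    have heq : (fun q => fderiv ℝ M (φ q))
        = fun q => T q • fderiv ℝ S (φ q) + ∑ i, Y i q • fderiv ℝ (X i) (φ q) := by
      funext q; exact hfl q
    rw [heq] at hL
    have hder := hL.unique (hRS.add (HasFDerivAt.fun_sum fun i _ => hRX i))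
    have happ := congrArg (fun (L : (ℝ × ℝ) →L[ℝ] (E →L[ℝ] ℝ)) => L (1, 0) w) hder
    simpa [ContinuousLinearMap.add_apply, ContinuousLinearMap.smul_apply,
      ContinuousLinearMap.comp_apply, ContinuousLinearMap.smulRight_apply,
      ContinuousLinearMap.sum_apply, smul_eq_mul] using happ
  -- Bform version of key
  have keyB : ∀ (q : ℝ × ℝ) (w : E),
      Bform M S X (φ q) (T q) (fun i => Y i q) (fderiv ℝ φ q (1, 0)) w
        = fderiv ℝ T q (1, 0) * fderiv ℝ S (φ q) w
          + ∑ i, fderiv ℝ (Y i) q (1, 0) * fderiv ℝ (X i) (φ q) w := by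
    intro q w
    simp only [Bform, D2, key q w, Finset.sum_add_distrib]
    ring
  -- symmetry of second derivatives
  have symm : ∀ (f : E → ℝ), ContDiff ℝ (⊤ : ℕ∞) f → ∀ (x u v : E),
      fderiv ℝ (fderiv ℝ f) x u v = fderiv ℝ (fderiv ℝ f) x v u := by
    intro f hf x u v
    exact second_derivative_symmetric (fun y => (hf.differentiable hone y).hasFDerivAt)
      (((hf.fderiv_right hle).differentiable hone x).hasFDerivAt) u v
  have Bsymm : ∀ (q : ℝ × ℝ) (u v : E),
      Bform M S X (φ q) (T q) (fun i => Y i q) u v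
        = Bform M S X (φ q) (T q) (fun i => Y i q) v u := by
    intro q u v
    simp only [Bform, D2, symm M hM (φ q) u v, symm S hS (φ q) u v]
    congr 1
    exact Finset.sum_congr rfl fun i _ => by rw [symm (X i) (hX i) (φ q) u v]
  -- linearity of Bform in the first slot
  have Blin : ∀ (q : ℝ × ℝ) (a b : E) (c : ℝ) (v : E),
      Bform M S X (φ q) (T q) (fun i => Y i q) (a - c • b) v
        = Bform M S X (φ q) (T q) (fun i => Y i q) a v
          - c * Bform M S X (φ q) (T q) (fun i => Y i q) b v := by
    intro q a b c v
    have h : ∀ f : E → ℝ, D2 f (φ q) (a - c • b) v = D2 f (φ q) a v - c * D2 f (φ q) b v := by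
      intro f
      simp [D2, map_sub, map_smul, ContinuousLinearMap.sub_apply,
        ContinuousLinearMap.smul_apply, smul_eq_mul]
    have hsum : ∑ i, Y i q * D2 (X i) (φ q) (a - c • b) v
        = (∑ i, Y i q * D2 (X i) (φ q) a v) - c * ∑ i, Y i q * D2 (X i) (φ q) b v := by
      rw [Finset.mul_sum, ← Finset.sum_sub_distrib]
      exact Finset.sum_congr rfl fun i _ => by rw [h (X i)]; ring
    simp only [Bform, h M, h S, hsum]
    ring
  -- the σ function and its smoothness
  set σf : ℝ × ℝ → ℝ := fun q =>
      fderiv ℝ T q (1, 0) * fderiv ℝ (S ∘ φ) q (1, 0) +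
        ∑ i, fderiv ℝ (Y i) q (1, 0) * fderiv ℝ (X i ∘ φ) q (1, 0) with hσf
  have hevalCD : ∀ (g : ℝ × ℝ → ℝ), ContDiff ℝ (⊤ : ℕ∞) g →
      ContDiff ℝ (⊤ : ℕ∞) (fun q => fderiv ℝ g q (1, 0)) := fun g hg =>
    (ContinuousLinearMap.apply ℝ ℝ ((1 : ℝ), (0 : ℝ))).contDiff.comp (hg.fderiv_right hle)
  have hσcd : ContDiff ℝ (⊤ : ℕ∞) σf := by
    apply ContDiff.add
    · exact (hevalCD T hT).mul (hevalCD (S ∘ φ) (hS.comp hφ))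
    · exact ContDiff.sum fun i _ =>
        (hevalCD (Y i) (hY i)).mul (hevalCD (X i ∘ φ) ((hX i).comp hφ))
  have hturnS' : fderiv ℝ (S ∘ φ) (0 : ℝ × ℝ) (1, 0) = 0 := hturnS
  have hturnX' : ∀ i, fderiv ℝ (X i ∘ φ) (0 : ℝ × ℝ) (1, 0) = 0 := hturnX
  have hσ00 : σf 0 = 0 := by
    simp [hσf, hturnS', fun i => hturnX' i]
  -- derivative of l' ↦ σf (0, l') at 0
  have hinner : HasDerivAt (fun l' : ℝ => ((0 : ℝ), l')) ((0 : ℝ), (1 : ℝ)) 0 :=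
    (hasDerivAt_const _ _).prodMk (hasDerivAt_id 0)
  have hh : HasDerivAt (fun l' : ℝ => σf (0, l')) (fderiv ℝ σf (0, 0) (0, 1)) 0 := by
    have := ((hσcd.differentiable hone) (0, 0)).hasFDerivAt.comp_hasDerivAt 0 hinner
    exact this
  have hc : 0 < fderiv ℝ σf (0, 0) (0, 1) := hσ
  -- slope tendsto
  have hslope : Tendsto (slope (fun l' : ℝ => σf (0, l')) 0) (𝓝[≠] 0)
      (𝓝 (fderiv ℝ σf (0, 0) (0, 1))) := hasDerivAt_iff_tendsto_slope.mp hh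
  -- continuity of the Bform(v', v') term
  have hcont0 : Continuous (fun l' : ℝ => ((0 : ℝ), l')) := continuous_const.prodMk continuous_id
  have hφc : Continuous fun l' : ℝ => φ (0, l') := hφ.continuous.comp hcont0
  have hv'c : Continuous fun l' : ℝ => v' (0, l') := hv'cont.comp hcont0
  have hD2cont : ∀ f : E → ℝ, ContDiff ℝ (⊤ : ℕ∞) f →
      Continuous fun l' : ℝ => D2 f (φ (0, l')) (v' (0, l')) (v' (0, l')) := by
    intro f hf
    have h2 : Continuous fun l' : ℝ => fderiv ℝ (fderiv ℝ f) (φ (0, l')) :=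
      ((hf.fderiv_right hle).fderiv_right hle).continuous.comp hφc
    exact (h2.clm_apply hv'c).clm_apply hv'c
  set Bv : ℝ → ℝ := fun l' =>
    Bform M S X (φ (0, l')) (T (0, l')) (fun i => Y i (0, l')) (v' (0, l')) (v' (0, l')) with hBv
  have hBvc : Continuous Bv := by
    apply Continuous.sub
    apply Continuous.sub
    · exact hD2cont M hM
    · exact (hT.continuous.comp hcont0).mul (hD2cont S hS)
    · exact continuous_finset_sum _ fun i _ =>
        ((hY i).continuous.comp hcont0).mul (hD2cont (X i) (hX i))
  have hGt : Tendsto (fun l' : ℝ => l' * Bv l') (𝓝 0) (𝓝 0) := by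
    have := (continuous_id.mul hBvc).tendsto 0
    simpa [Pi.mul_def] using this
  -- main positivity, eventually on 𝓝[>] 0
  have hpos : ∀ᶠ l' in 𝓝[>] (0 : ℝ),
      0 < slope (fun t : ℝ => σf (0, t)) 0 l' - l' * Bv l' := by
    have ht : Tendsto (fun l' : ℝ => slope (fun t : ℝ => σf (0, t)) 0 l' - l' * Bv l')
        (𝓝[>] 0) (𝓝 (fderiv ℝ σf (0, 0) (0, 1) - 0)) := by
      apply Tendsto.sub
      · exact hslope.mono_left (nhdsWithin_mono 0 fun x hx => ne_of_gt hx)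
      · exact hGt.mono_left nhdsWithin_le_nhds
    exact ht.eventually (eventually_gt_nhds (by linarith))
  have hE1 : ∀ᶠ l' in 𝓝 (0 : ℝ),
      ((((0 : ℝ), l') : ℝ × ℝ).1 * fderiv ℝ S (φ (0, l')) (u' (0, l'))
          + (((0 : ℝ), l') : ℝ × ℝ).2 * fderiv ℝ S (φ (0, l')) (v' (0, l'))
          = fderiv ℝ (S ∘ φ) (0, l') (1, 0)) ∧
        ∀ i, (((0 : ℝ), l') : ℝ × ℝ).1 * fderiv ℝ (X i) (φ (0, l')) (u' (0, l'))
          + (((0 : ℝ), l') : ℝ × ℝ).2 * fderiv ℝ (X i) (φ (0, l')) (v' (0, l'))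
          = fderiv ℝ (X i ∘ φ) (0, l') (1, 0) := by
    have hmaps : Tendsto (fun l' : ℝ => ((0 : ℝ), l')) (𝓝 0) (𝓝 ((0 : ℝ), (0 : ℝ))) :=
      hcont0.tendsto 0
    exact hmaps.eventually huv'
  have hEv : ∀ᶠ l' in 𝓝[>] (0 : ℝ),
      fderiv ℝ M (φ (0, l')) (fderiv ℝ φ (0, l') (1, 0) - l' • v' (0, l')) = 0 ∧
      fderiv ℝ S (φ (0, l')) (fderiv ℝ φ (0, l') (1, 0) - l' • v' (0, l')) = 0 ∧
      (∀ i, fderiv ℝ (X i) (φ (0, l')) (fderiv ℝ φ (0, l') (1, 0) - l' • v' (0, l')) = 0) ∧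
      Bform M S X (φ (0, l')) (T (0, l')) (fun i => Y i (0, l'))
        (fderiv ℝ φ (0, l') (1, 0) - l' • v' (0, l'))
        (fderiv ℝ φ (0, l') (1, 0) - l' • v' (0, l')) < 0 := by
    filter_upwards [hE1.filter_mono nhdsWithin_le_nhds, hpos, self_mem_nhdsWithin]
      with l' h1 h2 hl'
    have hl0 : (0 : ℝ) < l' := hl'
    have hl0' : l' ≠ 0 := ne_of_gt hl0
    set q : ℝ × ℝ := ((0 : ℝ), l') with hq
    -- relations from huv'
    have hSv : l' * fderiv ℝ S (φ q) (v' q) = fderiv ℝ (S ∘ φ) q (1, 0) := by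
      have := h1.1; simpa using this
    have hXv : ∀ i, l' * fderiv ℝ (X i) (φ q) (v' q) = fderiv ℝ (X i ∘ φ) q (1, 0) := by
      intro i; have := h1.2 i; simpa using this
    -- DS u = 0, DX u = 0
    have hDSu : fderiv ℝ S (φ q) (fderiv ℝ φ q (1, 0) - l' • v' q) = 0 := by
      rw [map_sub, map_smul, smul_eq_mul, hSv, chainS q]; ring
    have hDXu : ∀ i, fderiv ℝ (X i) (φ q) (fderiv ℝ φ q (1, 0) - l' • v' q) = 0 := by
      intro i
      rw [map_sub, map_smul, smul_eq_mul, hXv i, chainX i q]; ring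
    have hDMu : fderiv ℝ M (φ q) (fderiv ℝ φ q (1, 0) - l' • v' q) = 0 := by
      rw [hfl q]
      simp [ContinuousLinearMap.add_apply, ContinuousLinearMap.smul_apply,
        ContinuousLinearMap.sum_apply, hDSu, hDXu, smul_eq_mul]
    refine ⟨hDMu, hDSu, hDXu, ?_⟩
    -- the Bform estimate
    set u : E := fderiv ℝ φ q (1, 0) - l' • v' q with hu
    have hBphiu : Bform M S X (φ q) (T q) (fun i => Y i q) (fderiv ℝ φ q (1, 0)) u = 0 := by
      rw [keyB q u]
      simp [hDSu, fun i => hDXu i]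
    have hBphiv : l' * Bform M S X (φ q) (T q) (fun i => Y i q) (fderiv ℝ φ q (1, 0)) (v' q)
        = σf q := by
      rw [keyB q (v' q), hσf]
      simp only [mul_add, Finset.mul_sum]
      congr 1
      · rw [← hSv]; ring
      · exact Finset.sum_congr rfl fun i _ => by rw [← hXv i]; ring
    have hBuu : Bform M S X (φ q) (T q) (fun i => Y i q) u u
        = -(σf q) + l' * (l' * Bv l') := by
      have e1 : Bform M S X (φ q) (T q) (fun i => Y i q) u u
          = Bform M S X (φ q) (T q) (fun i => Y i q) (fderiv ℝ φ q (1, 0)) u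
            - l' * Bform M S X (φ q) (T q) (fun i => Y i q) (v' q) u := Blin q _ _ _ _
      have e2 : Bform M S X (φ q) (T q) (fun i => Y i q) (v' q) u
          = Bform M S X (φ q) (T q) (fun i => Y i q) (fderiv ℝ φ q (1, 0)) (v' q)
            - l' * Bform M S X (φ q) (T q) (fun i => Y i q) (v' q) (v' q) := by
        rw [Bsymm q (v' q) u, hu, Blin q _ _ _ _]
      have e3 : Bform M S X (φ q) (T q) (fun i => Y i q) (v' q) (v' q) = Bv l' := rfl
      rw [e1, hBphiu, e2, e3, mul_sub, ← hBphiv]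
      ring
    have hslope_eq : l' * slope (fun t : ℝ => σf (0, t)) 0 l' = σf q := by
      have hsl : slope (fun t : ℝ => σf (0, t)) 0 l' = (σf (0, l') - σf (0, 0)) / (l' - 0) :=
        slope_def_field _ _ _
      rw [hsl, show σf ((0 : ℝ), (0 : ℝ)) = 0 from hσ00, sub_zero, hq]
      field_simp
      ring
    have hfinal : Bform M S X (φ q) (T q) (fun i => Y i q) u u
        = -(l' * (slope (fun t : ℝ => σf (0, t)) 0 l' - l' * Bv l')) := by
      rw [mul_sub, hslope_eq, hBuu]; ring
    rw [hfinal]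
    have := mul_pos hl0 h2
    linarith
  rcases (nhdsGT_basis (0 : ℝ)).eventually_iff.mp hEv with ⟨ε, hε, hball⟩
  exact ⟨ε, hε, fun l' hl' => hball hl'⟩
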